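/- The derivation ε₂ of Lie[a,b], defined by ε₂(a) = [a,[a,b]] and ε₂(b) = [b,[a,b]], commutes with every derivation ε_{2i} (i ≥ 0), where ε_{2i}(a) = ad(a)^{2i}(b) and ε_{2i}(b) = Σ_{j=0}^{i-1} (-1)^j [ad(a)^j(b), ad(a)^{2i-1-j}(b)]. -/

import Mathlib

/-- The free Lie algebra Lie[a,b] on two generators over ℚ. -/
abbrev L := FreeLieAlgebra ℚ (Fin 2)
/-- The free associative algebra ℚ⟨a,b⟩. -/
abbrev FA := FreeAlgebra ℚ (Fin 2)
/-- The generator a. -/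
noncomputable def la : L := FreeLieAlgebra.of ℚ 0
/-- The generator b. -/
noncomputable def lb : L := FreeLieAlgebra.of ℚ 1
attribute [local instance] LieRing.ofAssociativeRing

/-- The canonical embedding of Lie[a,b] into ℚ⟨a,b⟩ (with commutator bracket). -/
noncomputable def theta : L →ₗ⁅ℚ⁆ FA := FreeLieAlgebra.lift ℚ (FreeAlgebra.ι ℚ)
/-- The coefficient of the word w (a = 0, b = 1) in a noncommutative polynomial. -/
noncomputable def coeffOf (p : FA) (w : List (Fin 2)) : ℚ :=
  FreeAlgebra.equivMonoidAlgebraFreeMonoid (R := ℚ) p |>.coeff (FreeMonoid.ofList w)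

/-- ε_{2i}(a) = ad(a)^{2i}(b). -/
noncomputable def epsA (i : ℕ) : L := ((LieAlgebra.ad ℚ L la) ^ (2 * i)) lb

/-- ε_{2i}(b) = Σ_{j=0}^{i-1} (-1)^j [ad(a)^j(b), ad(a)^{2i-1-j}(b)]. -/
noncomputable def epsB (i : ℕ) : L :=
  ∑ j ∈ Finset.range i, ((-1 : ℚ) ^ j) •
    ⁅((LieAlgebra.ad ℚ L la) ^ j) lb, ((LieAlgebra.ad ℚ L la) ^ (2 * i - 1 - j)) lb⁆


/-- b_k = ad(a)^k (b). -/
noncomputable def bk (k : ℕ) : L := ((LieAlgebra.ad ℚ L la) ^ k) lb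

lemma bk_zero : bk 0 = lb := rfl

lemma bk_succ (k : ℕ) : bk (k + 1) = ⁅la, bk k⁆ := by
  simp only [bk, pow_succ', Module.End.mul_apply, LieAlgebra.ad_apply]

lemma bk_two : bk 2 = ⁅la, bk 1⁆ := bk_succ 1

lemma epsA_eq (i : ℕ) : epsA i = bk (2 * i) := rfl

lemma epsB_eq (i : ℕ) : epsB i =
    ∑ j ∈ Finset.range i, ((-1 : ℚ) ^ j) • ⁅bk j, bk (2 * i - 1 - j)⁆ := rfl

lemma epsA_one : epsA 1 = bk 2 := rfl

lemma epsB_one : epsB 1 = ⁅bk 0, bk 1⁆ := by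
  simp [epsB_eq, Finset.sum_range_one]

lemma lie_sum' (x : L) (s : Finset ℕ) (f : ℕ → L) :
    ⁅x, ∑ j ∈ s, f j⁆ = ∑ j ∈ s, ⁅x, f j⁆ := by
  simpa only [LieAlgebra.ad_apply] using map_sum (LieAlgebra.ad ℚ L x) f s

lemma sum_lie' (s : Finset ℕ) (f : ℕ → L) (y : L) :
    ⁅∑ j ∈ s, f j, y⁆ = ∑ j ∈ s, ⁅f j, y⁆ := by
  rw [← lie_skew, lie_sum', ← Finset.sum_neg_distrib]
  exact Finset.sum_congr rfl fun j _ => lie_skew (f j) y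

/-- The vanishing set of a Lie derivation is a Lie subalgebra. -/
noncomputable def kerSub (E : LieDerivation ℚ L L) : LieSubalgebra ℚ L :=
  { LinearMap.ker (E : L →ₗ[ℚ] L) with
    lie_mem' := by
      intro x y hx hy
      simp only [Submodule.mem_carrier, SetLike.mem_coe, LinearMap.mem_ker,
        LieDerivation.coeFn_coe] at *
      rw [LieDerivation.apply_lie_eq_add, hx, hy]
      simp }

lemma mem_kerSub {E : LieDerivation ℚ L L} {x : L} : x ∈ kerSub E ↔ E x = 0 := by
  change x ∈ LinearMap.ker (E : L →ₗ[ℚ] L) ↔ _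
  rw [LinearMap.mem_ker, LieDerivation.coeFn_coe]

/-- A derivation of the free Lie algebra vanishing on the generators is zero. -/
lemma derivation_eq_zero (E : LieDerivation ℚ L L) (ha : E la = 0) (hb : E lb = 0) :
    E = 0 := by
  have hgen : ∀ n : Fin 2, FreeLieAlgebra.of ℚ n ∈ kerSub E := by
    intro n
    fin_cases n
    · exact mem_kerSub.mpr ha
    · exact mem_kerSub.mpr hb
  let g : L →ₗ⁅ℚ⁆ (kerSub E) :=
    FreeLieAlgebra.lift ℚ (fun n => (⟨FreeLieAlgebra.of ℚ n, hgen n⟩ : kerSub E))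
  have hcomp : ((kerSub E).incl.comp g) = LieHom.id := by
    apply FreeLieAlgebra.hom_ext
    intro n
    simp [g, LieHom.comp_apply, FreeLieAlgebra.lift_of_apply]
  have key : ∀ x : L, E x = 0 := by
    intro x
    have hgx : ((kerSub E).incl.comp g) x = x := by rw [hcomp]; rfl
    have hx : x ∈ kerSub E := by
      rw [← hgx]; exact (g x).2
    exact mem_kerSub.mp hx
  ext x
  simp [key x]

/-- ε₂ sends b_k to [b_k, b₁]. -/
lemma D2_bk (D2 : LieDerivation ℚ L L) (h2a : D2 la = epsA 1) (h2b : D2 lb = epsB 1)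
    (k : ℕ) : D2 (bk k) = ⁅bk k, bk 1⁆ := by
  induction k with
  | zero => rw [bk_zero, h2b, epsB_one, bk_zero]
  | succ k ih =>
      rw [bk_succ, LieDerivation.apply_lie_eq_add, ih, h2a, epsA_one]
      rw [leibniz_lie la (bk k) (bk 1), ← bk_succ k, ← bk_two,
        ← lie_skew (bk 2) (bk k)]
      abel

/-- ε_{2i} kills b₁. -/
lemma Di_b1 (i : ℕ) (Di : LieDerivation ℚ L L) (hia : Di la = epsA i) (hib : Di lb = epsB i) :
    Di (bk 1) = 0 := by
  have hb1 : bk 1 = ⁅la, lb⁆ := by rw [bk_succ 0, bk_zero]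
  rw [hb1, LieDerivation.apply_lie_eq_add, hia, hib, epsA_eq]
  have had : ⁅la, epsB i⁆ = ⁅bk 0, bk (2 * i)⁆ := by
    rw [epsB_eq, lie_sum']
    have hterm : ∀ j ∈ Finset.range i,
        ⁅la, ((-1 : ℚ) ^ j) • ⁅bk j, bk (2 * i - 1 - j)⁆⁆ =
        ((-1 : ℚ) ^ j) • ⁅bk j, bk (2 * i - j)⁆
          - ((-1 : ℚ) ^ (j + 1)) • ⁅bk (j + 1), bk (2 * i - (j + 1))⁆ := by
      intro j hj
      rw [Finset.mem_range] at hj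
      have h1 : 2 * i - 1 - j + 1 = 2 * i - j := by omega
      have h2 : 2 * i - 1 - j = 2 * i - (j + 1) := by omega
      rw [lie_smul, leibniz_lie, ← bk_succ j, ← bk_succ (2 * i - 1 - j), h1, h2, pow_succ]
      module
    rw [Finset.sum_congr rfl hterm, Finset.sum_range_sub']
    simp [show 2 * i - i = i from by omega, lie_self]
  rw [had, ← bk_zero, ← lie_skew (bk 0) (bk (2 * i))]
  abel

/-- The derivation ε₂ commutes with every derivation ε_{2i}, i ≥ 0. -/
theorem eps2_commutes_with_eps2i (i : ℕ) (D2 Di : LieDerivation ℚ L L)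
    (h2a : D2 la = epsA 1) (h2b : D2 lb = epsB 1)
    (hia : Di la = epsA i) (hib : Di lb = epsB i) :
    ⁅D2, Di⁆ = 0 := by
  apply derivation_eq_zero
  · -- on la
    rw [LieDerivation.commutator_apply, hia, h2a, epsA_eq, epsA_one,
      D2_bk D2 h2a h2b]
    have hDi2 : Di (bk 2) = ⁅bk (2 * i), bk 1⁆ := by
      rw [bk_two, LieDerivation.apply_lie_eq_add, Di_b1 i Di hia hib, hia, epsA_eq]
      simp
    rw [hDi2]
    abel
  · -- on lb
    rw [LieDerivation.commutator_apply, hib, h2b, epsB_one]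
    have hDi : Di ⁅bk 0, bk 1⁆ = ⁅epsB i, bk 1⁆ := by
      rw [LieDerivation.apply_lie_eq_add, Di_b1 i Di hia hib, bk_zero, hib]
      simp
    rw [hDi, epsB_eq, sum_lie', map_sum, ← Finset.sum_sub_distrib]
    apply Finset.sum_eq_zero
    intro j hj
    rw [map_smul, LieDerivation.apply_lie_eq_add, D2_bk D2 h2a h2b, D2_bk D2 h2a h2b,
      smul_lie, ← smul_sub]
    have hz : ⁅bk j, ⁅bk (2 * i - 1 - j), bk 1⁆⁆ + ⁅⁅bk j, bk 1⁆, bk (2 * i - 1 - j)⁆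
        - ⁅⁅bk j, bk (2 * i - 1 - j)⁆, bk 1⁆ = 0 := by
      rw [lie_lie (bk j) (bk (2 * i - 1 - j)) (bk 1),
        ← lie_skew ⁅bk j, bk 1⁆ (bk (2 * i - 1 - j))]
      abel
    rw [hz, smul_zero]
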